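/- Let E be a finite-dimensional real normed space, A : E → ℝ convex and superlinear, B its Fenchel transform. Let F be a convex subset of E on which A is affine and such that F is contained in L_A(y₀) := { x : A(x) + B(y₀) = ⟨y₀,x⟩ } for some y₀ ∈ E* (F is a flat of A). Let x₀ be a point in the relative interior of F. Then the set 𝓕(F) := { y ∈ E* : ∀ x ∈ F, A(x) + B(y) = ⟨y,x⟩ } equals the Legendre transform of x₀, i.e. 𝓕(F) = { y ∈ E* : A(x₀) + B(y) = ⟨y,x₀⟩ }. -/

import Mathlib

/-- From a point of the intrinsic interior of `F`, one can move slightly beyond it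
along the line from any point of `F` and stay in `F`. -/
lemma exists_beyond_aux {E : Type*} [NormedAddCommGroup E] [NormedSpace ℝ E]
    (F : Set E) (x₀ x : E) (hx₀ : x₀ ∈ intrinsicInterior ℝ F) (hx : x ∈ F) :
    ∃ s : ℝ, 0 < s ∧ x₀ + s • (x₀ - x) ∈ F := by
  obtain ⟨z, hz, rfl⟩ := mem_intrinsicInterior.mp hx₀
  obtain ⟨ε, hε, hball⟩ := Metric.isOpen_iff.mp isOpen_interior z hz
  set s : ℝ := ε / (2 * (‖(z : E) - x‖ + 1)) with hs
  have hspos : 0 < s := by positivity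
  refine ⟨s, hspos, ?_⟩
  have hxspan : x ∈ affineSpan ℝ F := subset_affineSpan ℝ F hx
  have hp : (z : E) + s • ((z : E) - x) ∈ affineSpan ℝ F := by
    have := (affineSpan ℝ F).smul_vsub_vadd_mem s z.2 hxspan z.2
    simpa [vsub_eq_sub, vadd_eq_add, add_comm] using this
  have hdist : dist (⟨(z : E) + s • ((z : E) - x), hp⟩ : affineSpan ℝ F) z < ε := by
    rw [Subtype.dist_eq]
    simp only [dist_eq_norm, add_sub_cancel_left, norm_smul, Real.norm_eq_abs,
      abs_of_pos hspos]
    have h1 : ‖(z : E) - x‖ < ‖(z : E) - x‖ + 1 := by linarith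
    have h2 : 0 < ‖(z : E) - x‖ + 1 := by positivity
    rw [hs, div_mul_eq_mul_div, mul_comm]
    rw [div_lt_iff₀ (by positivity)]
    nlinarith [norm_nonneg ((z : E) - x)]
  have := interior_subset (hball hdist)
  exact this

theorem stmt_5 {E : Type*} [NormedAddCommGroup E] [NormedSpace ℝ E] [FiniteDimensional ℝ E]
    (A : E → ℝ) (hconv : ConvexOn ℝ Set.univ A)
    (hsup : ∀ C > (0:ℝ), ∃ R : ℝ, ∀ x : E, R ≤ ‖x‖ → C * ‖x‖ ≤ A x)
    (B : (E →L[ℝ] ℝ) → ℝ) (hB : ∀ y : E →L[ℝ] ℝ, B y = ⨆ x : E, (y x - A x))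
    (F : Set E) (hFconv : Convex ℝ F)
    (haff : ∃ (l : E →ₗ[ℝ] ℝ) (c : ℝ), ∀ x ∈ F, A x = l x + c)
    (y₀ : E →L[ℝ] ℝ) (hF : F ⊆ {x : E | A x + B y₀ = y₀ x})
    (x₀ : E) (hx₀ : x₀ ∈ intrinsicInterior ℝ F) :
    {y : E →L[ℝ] ℝ | ∀ x ∈ F, A x + B y = y x} =
      {y : E →L[ℝ] ℝ | A x₀ + B y = y x₀} := by
  have hx₀F : x₀ ∈ F := intrinsicInterior_subset hx₀
  -- A is continuous
  have hcont : Continuous A := by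
    have := hconv.continuousOn isOpen_univ
    rwa [continuousOn_univ] at this
  -- the supremum defining B is a real upper bound
  have hbdd : ∀ (y : E →L[ℝ] ℝ) (z : E), y z - A z ≤ B y := by
    intro y
    obtain ⟨R, hR⟩ := hsup (‖y‖ + 1) (by positivity)
    set R' : ℝ := max R 0 with hR'
    obtain ⟨w, hw, hwmin⟩ := (isCompact_closedBall (0 : E) R').exists_isMinOn
      ⟨0, Metric.mem_closedBall_self (le_max_right R 0)⟩ hcont.continuousOn
    have hub : ∀ z : E, y z - A z ≤ max 0 (‖y‖ * R' - A w) := by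
      intro z
      rcases le_or_gt R ‖z‖ with h | h
      · have h1 := hR z h
        have h2 : y z ≤ ‖y‖ * ‖z‖ := le_trans (le_abs_self _) (y.le_opNorm z)
        have h3 : (0:ℝ) ≤ ‖z‖ := norm_nonneg z
        have h4 := le_max_left (0:ℝ) (‖y‖ * R' - A w)
        nlinarith
      · have hz : z ∈ Metric.closedBall (0 : E) R' := by
          rw [Metric.mem_closedBall, dist_zero_right]; exact le_trans h.le (le_max_left R 0)
        have h1 : A w ≤ A z := hwmin hz
        have h2 : y z ≤ ‖y‖ * ‖z‖ := le_trans (le_abs_self _) (y.le_opNorm z)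
        have h3 : ‖y‖ * ‖z‖ ≤ ‖y‖ * R' := by
          apply mul_le_mul_of_nonneg_left _ (norm_nonneg y)
          rwa [Metric.mem_closedBall, dist_zero_right] at hz
        have h4 := le_max_right (0:ℝ) (‖y‖ * R' - A w)
        linarith
    intro z
    rw [hB]
    exact le_ciSup ⟨max 0 (‖y‖ * R' - A w), by rintro _ ⟨z', rfl⟩; exact hub z'⟩ z
  ext y
  simp only [Set.mem_setOf_eq]
  constructor
  · intro h
    exact h x₀ hx₀F
  · intro h x hx
    obtain ⟨s, hspos, hx'F⟩ := exists_beyond_aux F x₀ x hx₀ hx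
    set x' : E := x₀ + s • (x₀ - x) with hx'
    obtain ⟨l, c, hl⟩ := haff
    have hA0 : A x₀ = l x₀ + c := hl x₀ hx₀F
    have hAx : A x = l x + c := hl x hx
    have hAx' : A x' = l x' + c := hl x' hx'F
    have hlx' : l x' = l x₀ + s * (l x₀ - l x) := by
      simp [hx', map_add, map_smul, map_sub, smul_eq_mul]
    have hyx' : y x' = y x₀ + s * (y x₀ - y x) := by
      simp [hx', map_add, map_smul, map_sub, smul_eq_mul]
    -- B y = y x₀ - A x₀ and y x' - A x' ≤ B y
    have hBy : B y = y x₀ - A x₀ := by linarith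
    have hb1 := hbdd y x'
    have hb2 := hbdd y x
    -- from hb1: s * ((y x₀ - l x₀) - (y x - l x)) ≤ 0, so y x - A x ≥ B y
    have key : y x - A x ≥ B y := by nlinarith
    linarith
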